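/- For every vector strong subtree (S_1, S_2) of (T_1, T_2) of height k ∈ ω + 1, the valuation tree val(S_1, S_2) is a subtree of S_2 (and hence of T_2) and its height equals k. -/

import Mathlib

open scoped Classical

section AbstractTrees

variable {α : Type*} [PartialOrder α]

/-- The set of strict predecessors of `t` inside `U`. -/
def predsIn (U : Set α) (t : α) : Set α := {s ∈ U | s < t}

/-- The level of a node `t` in the tree `U`: the number of its strict predecessors in `U`. -/
noncomputable def levelIn (U : Set α) (t : α) : ℕ := (predsIn U t).ncard

/-- `U` is a tree: the set of strict predecessors of every node is finite and
linearly ordered. -/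
def IsTreeOn (U : Set α) : Prop :=
  ∀ t ∈ U, (predsIn U t).Finite ∧
    ∀ s₁ ∈ predsIn U t, ∀ s₂ ∈ predsIn U t, s₁ ≤ s₂ ∨ s₂ ≤ s₁

/-- The height of the tree `U`: the least `n` such that `U` has no node of level `n`
(equivalently, for trees, the supremum of `level + 1`), or `ω = ⊤` if there is no such `n`. -/
noncomputable def heightIn (U : Set α) : ℕ∞ :=
  ⨆ t ∈ U, ((levelIn U t : ℕ∞) + 1)

/-- The level set `L_U(D)` of `D` in `U`. -/
def levelSetIn (U D : Set α) : Set ℕ := levelIn U '' D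

/-- `t` is a maximal node of `U`. -/
def IsMaximalIn (U : Set α) (t : α) : Prop := t ∈ U ∧ ∀ s ∈ U, ¬ t < s

/-- `U` is rooted: it has a unique minimal element below all of its nodes. -/
def IsRootedIn (U : Set α) : Prop := ∃ r ∈ U, ∀ t ∈ U, r ≤ t

/-- `U` is balanced: either it has infinite height and no maximal nodes, or all its
maximal nodes lie on level `h(U) - 1`. -/
def IsBalanced (U : Set α) : Prop :=
  (heightIn U = ⊤ ∧ ∀ t, ¬ IsMaximalIn U t) ∨
  (heightIn U ≠ ⊤ ∧ ∀ t, IsMaximalIn U t → ((levelIn U t : ℕ∞) + 1 = heightIn U))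

/-- `m` is the meet `s ∧_U t` of `s` and `t` in `U`. -/
def IsMeetIn (U : Set α) (s t m : α) : Prop :=
  m ∈ U ∧ m ≤ s ∧ m ≤ t ∧ ∀ m' ∈ U, m' ≤ s → m' ≤ t → m' ≤ m

/-- `S` is a subtree of `U`: a subset closed under binary meets (taken in `U`). -/
def IsSubtreeOf (U S : Set α) : Prop :=
  S ⊆ U ∧ ∀ s ∈ S, ∀ t ∈ S, ∃ m ∈ S, IsMeetIn U s t m

/-- `t` is an immediate successor of `s` in `U`. -/
def IsImmSuccIn (U : Set α) (s t : α) : Prop :=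
  s ∈ U ∧ t ∈ U ∧ s < t ∧ ∀ u ∈ U, s < u → ¬ u < t

/-- `U` is finitely branching. -/
def IsFinBranching (U : Set α) : Prop :=
  ∀ t ∈ U, {s | IsImmSuccIn U t s}.Finite

/-- `S` is a strong subtree of `U`: it is a subtree which is either empty, or is
rooted, balanced, has each of its levels contained in a single level of `U`, and for every
non-maximal node `s ∈ S` and every immediate successor `t` of `s` in `U` there is exactly
one immediate successor of `s` in `S` above `t`. -/
def IsStrongSubtreeOf (U S : Set α) : Prop :=
  IsSubtreeOf U S ∧
  (S = ∅ ∨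
    (IsRootedIn S ∧ IsBalanced S ∧
      (∀ s ∈ S, ∀ t ∈ S, levelIn S s = levelIn S t → levelIn U s = levelIn U t) ∧
      (∀ s ∈ S, ¬ IsMaximalIn S s → ∀ t, IsImmSuccIn U s t →
        ∃! c, IsImmSuccIn S s c ∧ t ≤ c)))

end AbstractTrees

/-- A finite `{0,1}`-vector: a function `len → Bool`, represented with total entry
function which vanishes from index `len` on. Nodes of the tree `T₁`. -/
structure Vec where
  len : ℕ
  entry : ℕ → Bool
  outside : ∀ i, len ≤ i → entry i = false

/-- A finite strictly lower triangular square `{0,1}`-matrix: a function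
`size × size → Bool` with `entry i j = 0` for `i ≤ j`, represented with a total entry
function which vanishes outside. Nodes of the tree `T₂`. -/
structure Mat where
  size : ℕ
  entry : ℕ → ℕ → Bool
  lower : ∀ i j, i ≤ j → entry i j = false
  outside : ∀ i j, size ≤ i → entry i j = false

/-- The tree order on `T₁`: end-extension of finite `{0,1}`-vectors. -/
instance : PartialOrder Vec where
  le u v := u.len ≤ v.len ∧ ∀ i, i < u.len → u.entry i = v.entry i
  le_refl u := ⟨le_rfl, fun _ _ => rfl⟩
  le_trans u v w h h' :=
    ⟨h.1.trans h'.1, fun i hi => (h.2 i hi).trans (h'.2 i (lt_of_lt_of_le hi h.1))⟩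
  le_antisymm u v h h' := by
    have hl : u.len = v.len := le_antisymm h.1 h'.1
    have he : u.entry = v.entry := by
      funext i
      by_cases hi : i < u.len
      · exact h.2 i hi
      · rw [u.outside i (not_lt.mp hi), v.outside i (by omega)]
    cases u; cases v
    simp only at hl he
    subst hl; subst he; rfl

/-- The tree order on `T₂`: extension of strictly lower triangular `{0,1}`-matrices. -/
instance : PartialOrder Mat where
  le A B := A.size ≤ B.size ∧ ∀ i j, i < A.size → j < A.size → A.entry i j = B.entry i j
  le_refl A := ⟨le_rfl, fun _ _ _ _ => rfl⟩
  le_trans A B C h h' :=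
    ⟨h.1.trans h'.1, fun i j hi hj => (h.2 i j hi hj).trans
      (h'.2 i j (lt_of_lt_of_le hi h.1) (lt_of_lt_of_le hj h.1))⟩
  le_antisymm A B h h' := by
    have hl : A.size = B.size := le_antisymm h.1 h'.1
    have he : A.entry = B.entry := by
      funext i j
      by_cases hi : i < A.size
      · by_cases hj : j < A.size
        · exact h.2 i j hi hj
        · -- j ≥ A.size and i < A.size, so i < j and both entries vanish
          rw [A.lower i j (by omega), B.lower i j (by omega)]
      · rw [A.outside i j (not_lt.mp hi), B.outside i j (by omega)]
    cases A; cases B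
    simp only at hl he
    subst hl; subst he; rfl

/-- The extension `A⌢v` of an `n × n` matrix `A` by a vector `v` of length `n`:
the `(n+1) × (n+1)` matrix extending `A` whose last row is `v` followed by `0` and whose
last column is zero. -/
def matExtend (A : Mat) (v : Vec) : Mat where
  size := A.size + 1
  entry := fun i j =>
    if i < A.size then A.entry i j
    else if i = A.size ∧ j < A.size then v.entry j else false
  lower := by
    intro i j hij
    by_cases h1 : i < A.size
    · simp only [if_pos h1]
      exact A.lower i j hij
    · show (if i < A.size then A.entry i j
          else if i = A.size ∧ j < A.size then v.entry j else false) = false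
      rw [if_neg h1, if_neg (by omega)]
  outside := by
    intro i j hi
    show (if i < A.size then A.entry i j
        else if i = A.size ∧ j < A.size then v.entry j else false) = false
    rw [if_neg (by omega), if_neg (by omega)]

/-- The `m`-th row of a matrix `A`, as a `{0,1}`-vector of length `|A|`. -/
def rowOf (A : Mat) (m : ℕ) : Vec where
  len := A.size
  entry := fun l => A.entry m l
  outside := by
    intro l hl
    rcases le_or_gt m l with h | h
    · exact A.lower m l h
    · exact A.outside m l (hl.trans h.le)
/-- A 3-uniform hypergraph on a vertex set `V`: a set of hyperedges, each a 3-element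
subset of `V`. -/
structure HGraph (V : Type*) where
  edges : Set (Finset V)
  card_eq : ∀ e ∈ edges, e.card = 3

/-- An embedding of 3-uniform hypergraphs: an injective map `f` between the vertex sets
such that `{x, y, z}` is a hyperedge if and only if `{f x, f y, f z}` is a hyperedge. -/
def IsHGEmbedding {V W : Type*} (A : HGraph V) (B : HGraph W) (f : V → W) : Prop :=
  Function.Injective f ∧
    ∀ x y z : V, ({x, y, z} : Finset V) ∈ A.edges ↔ ({f x, f y, f z} : Finset W) ∈ B.edges

/-- The 3-uniform hypergraph `G`: its vertices are the nodes of the tree `T₂`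
(i.e. finite strictly lower triangular `{0,1}`-matrices), and `{A, B, C}` is a hyperedge
if and only if `|A| < |B| < |C|` and `C_{|B|, |A|} = 1`. -/
noncomputable def Ghyp : HGraph Mat where
  edges := {e | ∃ A B C : Mat, e = {A, B, C} ∧
    A.size < B.size ∧ B.size < C.size ∧ C.entry B.size A.size = true}
  card_eq := by
    rintro e ⟨A, B, C, rfl, h1, h2, -⟩
    refine Finset.card_eq_three.mpr ⟨A, B, C, ?_, ?_, ?_, rfl⟩
    · exact fun h => absurd (congrArg Mat.size h) (by omega)
    · exact fun h => absurd (congrArg Mat.size h) (by omega)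
    · exact fun h => absurd (congrArg Mat.size h) (by omega)

/-- Given a 3-uniform hypergraph `H` on `ℕ`, the matrix `A^i` assigned to the vertex
`i`: the `(2i+1) × (2i+1)` strictly lower triangular `{0,1}`-matrix with
`A^i_{2k+1, 2j} = A^i_{2k+1, 2j+1} = 1` for every hyperedge `{j, k, i}` of `H` with
`j < k < i`, and all other entries `0`. -/
noncomputable def matOf (H : HGraph ℕ) (i : ℕ) : Mat where
  size := 2 * i + 1
  entry := fun r c =>
    if r % 2 = 1 ∧ c / 2 < r / 2 ∧ r / 2 < i ∧ ({c / 2, r / 2, i} : Finset ℕ) ∈ H.edges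
    then true else false
  lower := by
    intro r c hrc
    show (if r % 2 = 1 ∧ c / 2 < r / 2 ∧ r / 2 < i ∧ ({c / 2, r / 2, i} : Finset ℕ) ∈ H.edges
        then true else false) = false
    rw [if_neg]
    rintro ⟨h1, h2, h3, -⟩
    omega
  outside := by
    intro r c hr
    show (if r % 2 = 1 ∧ c / 2 < r / 2 ∧ r / 2 < i ∧ ({c / 2, r / 2, i} : Finset ℕ) ∈ H.edges
        then true else false) = false
    rw [if_neg]
    rintro ⟨h1, h2, h3, -⟩
    omega

/-- The valuation tree `val(S₁, S₂)` corresponding to a vector strong subtree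
`(S₁, S₂)` of `(T₁, T₂)`, as a predicate: the root of `S₂` belongs to it, and whenever
`A` belongs to it, `v ∈ S₁(|A|_{S₂})` and `{C} = ImmSucc_{S₂}(A) ∩ Succ_{T₂}(A⌢v)`,
then `C` belongs to it. -/
inductive InVal (S₁ : Set Vec) (S₂ : Set Mat) : Mat → Prop where
  | root (A : Mat) (hA : A ∈ S₂) (hroot : ∀ B ∈ S₂, A ≤ B) : InVal S₁ S₂ A
  | step (A : Mat) (v : Vec) (C : Mat) (hA : InVal S₁ S₂ A) (hv : v ∈ S₁)
      (hlev : levelIn S₁ v = levelIn S₂ A)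
      (hC : IsImmSuccIn S₂ A C ∧ matExtend A v ≤ C)
      (huniq : ∀ C' : Mat, IsImmSuccIn S₂ A C' ∧ matExtend A v ≤ C' → C' = C) :
      InVal S₁ S₂ C

/-- `(S₁, S₂)` is a vector strong subtree of the vector tree `(T₁, T₂)`:
both coordinates are strong subtrees of the respective (ambient) trees and the pair is
level compatible, i.e. `L_{T₁}(S₁) = L_{T₂}(S₂)`. -/
def IsVecStrongPair (S₁ : Set Vec) (S₂ : Set Mat) : Prop :=
  IsStrongSubtreeOf Set.univ S₁ ∧ IsStrongSubtreeOf Set.univ S₂ ∧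
    levelSetIn Set.univ S₁ = levelSetIn Set.univ S₂

/-- A subset of `T₂` is a valuation tree if it equals `val(S₁, S₂)` for some vector
strong subtree `(S₁, S₂)` of `(T₁, T₂)`. -/
def IsValTree (T : Set Mat) : Prop :=
  ∃ S₁ S₂, IsVecStrongPair S₁ S₂ ∧ T = {C | InVal S₁ S₂ C}

/-- A structural isomorphism between subtrees `T` and `T'` of `T₂`: an isomorphism of
trees preserving relative heights of nodes such that, for all `A, B, C ∈ T` with
`|A| ≤ |B| < |C|`, one has `f(C)_{|f(B)|, |f(A)|} = C_{|B|, |A|}`. -/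
structure IsStructIso (T T' : Set Mat) (f : Mat → Mat) : Prop where
  mapsTo : ∀ A ∈ T, f A ∈ T'
  injOn : ∀ A ∈ T, ∀ B ∈ T, f A = f B → A = B
  surjOn : ∀ C ∈ T', ∃ A ∈ T, f A = C
  orderIso : ∀ A ∈ T, ∀ B ∈ T, (A ≤ B ↔ f A ≤ f B)
  levelEq : ∀ A ∈ T, levelIn T A = levelIn T' (f A)
  passing : ∀ A ∈ T, ∀ B ∈ T, ∀ C ∈ T, A.size ≤ B.size → B.size < C.size →
    (f C).entry (f B).size (f A).size = C.entry B.size A.size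


section AuxTree

variable {α : Type*} [PartialOrder α]

lemma le_heightIn {U : Set α} {t : α} (ht : t ∈ U) :
    (levelIn U t : ℕ∞) + 1 ≤ heightIn U :=
  le_iSup₂ (f := fun t (_ : t ∈ U) => ((levelIn U t : ℕ∞) + 1)) t ht

lemma lt_heightIn {U : Set α} {a : ℕ∞} (h : a < heightIn U) :
    ∃ t ∈ U, a < (levelIn U t : ℕ∞) + 1 := by
  simpa [heightIn, lt_iSup_iff] using h

lemma levelIn_lt_of_lt {U : Set α} (hU : IsTreeOn U) {s t : α} (hs : s ∈ U) (ht : t ∈ U)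
    (h : s < t) : levelIn U s < levelIn U t := by
  have hfin := (hU t ht).1
  have hsub : insert s (predsIn U s) ⊆ predsIn U t := by
    intro x hx
    rcases hx with rfl | hx
    · exact ⟨hs, h⟩
    · exact ⟨hx.1, hx.2.trans h⟩
  have hss : predsIn U s ⊂ insert s (predsIn U s) :=
    Set.ssubset_insert (fun hx => lt_irrefl s hx.2)
  calc levelIn U s < (insert s (predsIn U s)).ncard :=
        Set.ncard_lt_ncard hss (hfin.subset hsub)
    _ ≤ levelIn U t := Set.ncard_le_ncard hsub hfin

lemma exists_at_level {U : Set α} (hU : IsTreeOn U) :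
    ∀ N : ℕ, ∀ t ∈ U, levelIn U t = N → ∀ n ≤ N, ∃ s ∈ U, s ≤ t ∧ levelIn U s = n := by
  intro N
  induction N with
  | zero =>
    intro t ht hlev n hn
    have hn0 : n = 0 := by omega
    subst hn0
    exact ⟨t, ht, le_rfl, hlev⟩
  | succ N ih =>
    intro t ht hlev n hn
    rcases eq_or_lt_of_le hn with rfl | hn'
    · exact ⟨t, ht, le_rfl, hlev⟩
    have hfin := (hU t ht).1
    have hne : (predsIn U t).Nonempty := by
      rw [Set.nonempty_iff_ne_empty]
      intro h0
      have : levelIn U t = 0 := by simp [levelIn, h0]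
      omega
    obtain ⟨s, hs, hmax⟩ := Set.Finite.exists_maximalFor id _ hfin hne
    have hall : ∀ x ∈ predsIn U t, x ≤ s := by
      intro x hx
      rcases (hU t ht).2 x hx s hs with h | h
      · exact h
      · exact hmax hx h
    have hpred : predsIn U s = predsIn U t \ {s} := by
      ext x
      constructor
      · rintro ⟨hxU, hxs⟩
        exact ⟨⟨hxU, hxs.trans hs.2⟩, fun hx => absurd ((Set.mem_singleton_iff.mp hx) ▸ hxs)
          (lt_irrefl s)⟩
      · rintro ⟨hx, hxs⟩
        exact ⟨hx.1, lt_of_le_of_ne (hall x hx) (by simpa using hxs)⟩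
    have hlevs : levelIn U s = N := by
      have hd : (predsIn U t \ {s}).ncard = (predsIn U t).ncard - 1 :=
        Set.ncard_diff_singleton_of_mem hs
      have : levelIn U t = N + 1 := hlev
      unfold levelIn at this ⊢
      rw [hpred, hd, this]
      omega
    obtain ⟨s', hs', hle, hlev'⟩ := ih s hs.1 hlevs n (by omega)
    exact ⟨s', hs', hle.trans hs.2.le, hlev'⟩

lemma predsIn_of_immSucc {U : Set α} (hU : IsTreeOn U) {s t : α}
    (h : IsImmSuccIn U s t) : predsIn U t = insert s (predsIn U s) := by
  obtain ⟨hsU, htU, hst, hmin⟩ := h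
  ext x
  constructor
  · rintro ⟨hxU, hxt⟩
    rcases (hU t htU).2 x ⟨hxU, hxt⟩ s ⟨hsU, hst⟩ with h | h
    · rcases eq_or_lt_of_le h with rfl | h'
      · exact Or.inl rfl
      · exact Or.inr ⟨hxU, h'⟩
    · rcases eq_or_lt_of_le h with rfl | h'
      · exact Or.inl rfl
      · exact absurd hxt (hmin x hxU h')
  · rintro (rfl | hx)
    · exact ⟨hsU, hst⟩
    · exact ⟨hx.1, hx.2.trans hst⟩

lemma levelIn_immSucc {U : Set α} (hU : IsTreeOn U) {s t : α}
    (h : IsImmSuccIn U s t) : levelIn U t = levelIn U s + 1 := by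
  unfold levelIn
  rw [predsIn_of_immSucc hU h,
    Set.ncard_insert_of_notMem (fun hs => lt_irrefl s hs.2) ((hU s h.1).1)]

lemma levelIn_root {U : Set α} {r : α} (hr : ∀ t ∈ U, r ≤ t) : levelIn U r = 0 := by
  have h0 : predsIn U r = ∅ := by
    ext x
    simp only [predsIn, Set.mem_setOf_eq, Set.mem_empty_iff_false, iff_false]
    rintro ⟨hx, hlt⟩
    exact absurd (lt_of_le_of_lt (hr x hx) hlt) (lt_irrefl r)
  simp [levelIn, h0]

end AuxTree

lemma vec_le_of_le {u v w : Vec} (hu : u ≤ w) (hv : v ≤ w) (h : u.len ≤ v.len) : u ≤ v :=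
  ⟨h, fun i hi => by rw [hu.2 i hi, ← hv.2 i (lt_of_lt_of_le hi h)]⟩

lemma vec_comparable {u v w : Vec} (hu : u ≤ w) (hv : v ≤ w) : u ≤ v ∨ v ≤ u := by
  rcases le_total u.len v.len with h | h
  · exact Or.inl (vec_le_of_le hu hv h)
  · exact Or.inr (vec_le_of_le hv hu h)

lemma vec_isTreeOn (U : Set Vec) : IsTreeOn U := by
  intro t ht
  constructor
  · have hinj : Set.InjOn Vec.len {u : Vec | u < t} := by
      intro a ha b hb hlen
      exact le_antisymm (vec_le_of_le (le_of_lt ha) (le_of_lt hb) hlen.le)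
        (vec_le_of_le (le_of_lt hb) (le_of_lt ha) hlen.ge)
    have himg : Vec.len '' {u : Vec | u < t} ⊆ Set.Iic t.len := by
      rintro _ ⟨u, hu, rfl⟩
      have hu' := Set.mem_setOf_eq ▸ hu
      exact (le_of_lt hu').1
    exact (Set.Finite.of_finite_image ((Set.finite_Iic _).subset himg) hinj).subset
      (fun x hx => hx.2)
  · intro s₁ h₁ s₂ h₂
    exact vec_comparable h₁.2.le h₂.2.le

lemma mat_le_of_le {A B C : Mat} (hA : A ≤ C) (hB : B ≤ C) (h : A.size ≤ B.size) : A ≤ B :=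
  ⟨h, fun i j hi hj => by
    rw [hA.2 i j hi hj, ← hB.2 i j (lt_of_lt_of_le hi h) (lt_of_lt_of_le hj h)]⟩

lemma mat_comparable {A B C : Mat} (hA : A ≤ C) (hB : B ≤ C) : A ≤ B ∨ B ≤ A := by
  rcases le_total A.size B.size with h | h
  · exact Or.inl (mat_le_of_le hA hB h)
  · exact Or.inr (mat_le_of_le hB hA h)

lemma mat_eq_of_le_size {A B : Mat} (h : A ≤ B) (hs : B.size ≤ A.size) : A = B := by
  have hsz : A.size = B.size := le_antisymm h.1 hs
  have he : A.entry = B.entry := by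
    funext i j
    by_cases hi : i < A.size
    · by_cases hj : j < A.size
      · exact h.2 i j hi hj
      · rw [A.lower i j (by omega), B.lower i j (by omega)]
    · rw [A.outside i j (by omega), B.outside i j (by omega)]
  cases A; cases B
  simp only at hsz he
  subst hsz; subst he; rfl

lemma mat_size_lt_of_lt {A B : Mat} (h : A < B) : A.size < B.size := by
  rcases lt_or_ge A.size B.size with h' | h'
  · exact h'
  · exact absurd (mat_eq_of_le_size h.le h') h.ne

lemma mat_isTreeOn (U : Set Mat) : IsTreeOn U := by
  intro t ht
  constructor
  · have hinj : Set.InjOn Mat.size {u : Mat | u < t} := by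
      intro a ha b hb hlen
      exact le_antisymm (mat_le_of_le (le_of_lt ha) (le_of_lt hb) hlen.le)
        (mat_le_of_le (le_of_lt hb) (le_of_lt ha) hlen.ge)
    have himg : Mat.size '' {u : Mat | u < t} ⊆ Set.Iic t.size := by
      rintro _ ⟨u, hu, rfl⟩
      have hu' := Set.mem_setOf_eq ▸ hu
      exact (le_of_lt hu').1
    exact (Set.Finite.of_finite_image ((Set.finite_Iic _).subset himg) hinj).subset
      (fun x hx => hx.2)
  · intro s₁ h₁ s₂ h₂
    exact mat_comparable h₁.2.le h₂.2.le

lemma matExtend_entry (A : Mat) (v : Vec) (i j : ℕ) :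
    (matExtend A v).entry i j = if i < A.size then A.entry i j
      else if i = A.size ∧ j < A.size then v.entry j else false := rfl

lemma le_matExtend (A : Mat) (v : Vec) : A ≤ matExtend A v := by
  refine ⟨Nat.le_succ _, fun i j hi _ => ?_⟩
  rw [matExtend_entry, if_pos hi]

lemma isImmSucc_matExtend (A : Mat) (v : Vec) :
    IsImmSuccIn Set.univ A (matExtend A v) := by
  refine ⟨Set.mem_univ _, Set.mem_univ _, lt_of_le_of_ne (le_matExtend A v) ?_, ?_⟩
  · intro h
    have : A.size = (matExtend A v).size := congrArg Mat.size h
    simp [matExtend] at this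
  · intro u _ hu hut
    have h1 := mat_size_lt_of_lt hu
    have h2 := mat_size_lt_of_lt hut
    have : (matExtend A v).size = A.size + 1 := rfl
    omega

section ValTree

variable {S₁ : Set Vec} {S₂ : Set Mat}

lemma InVal.mem {C : Mat} (h : InVal S₁ S₂ C) : C ∈ S₂ := by
  induction h with
  | root A hA _ => exact hA
  | step A v C hA hv hlev hC huniq ih => exact hC.1.2.1

lemma inval_pred {C : Mat} (hC : InVal S₁ S₂ C) :
    ∀ B ∈ S₂, B < C → InVal S₁ S₂ B := by
  induction hC with
  | root A hA hroot =>
    intro B hB hlt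
    exact absurd (lt_of_le_of_lt (hroot B hB) hlt) (lt_irrefl A)
  | step A v C hA hv hlev hC huniq ih =>
    intro B hB hlt
    obtain ⟨⟨hAS, hCS, hAC, hmin⟩, hext⟩ := hC
    rcases mat_comparable hlt.le hAC.le with h | h
    · rcases eq_or_lt_of_le h with rfl | h'
      · exact hA
      · exact ih B hB h'
    · rcases eq_or_lt_of_le h with rfl | h'
      · exact hA
      · exact absurd hlt (hmin B hB h')

lemma inval_meet {C C' : Mat} (hC : InVal S₁ S₂ C) (hC' : InVal S₁ S₂ C') :
    ∃ m, InVal S₁ S₂ m ∧ IsMeetIn S₂ C C' m := by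
  induction hC' with
  | root A hA hroot =>
    exact ⟨A, InVal.root A hA hroot, hA, hroot C hC.mem, le_rfl, fun m' _ _ h => h⟩
  | step A v C' hA hv hlev hCc huniq ih =>
    have hself : InVal S₁ S₂ C' := InVal.step A v C' hA hv hlev hCc huniq
    obtain ⟨⟨hAS, hC'S, hAC', hmin⟩, hext⟩ := hCc
    by_cases h1 : C ≤ C'
    · exact ⟨C, hC, hC.mem, le_rfl, h1, fun m' _ h _ => h⟩
    by_cases h2 : C' ≤ C
    · exact ⟨C', hself, hC'S, h2, le_rfl, fun m' _ _ h => h⟩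
    obtain ⟨m, hm, hmS, hmC, hmA, hmmin⟩ := ih
    refine ⟨m, hm, hmS, hmC, hmA.trans hAC'.le, ?_⟩
    intro m' hm' hm'C hm'C'
    apply hmmin m' hm' hm'C
    have hne : m' ≠ C' := fun h => h2 (h ▸ hm'C)
    rcases mat_comparable hm'C' hAC'.le with h | h
    · exact h
    · rcases eq_or_lt_of_le h with rfl | h'
      · exact le_rfl
      · exact absurd (lt_of_le_of_ne hm'C' hne) (hmin m' hm' h')

lemma meet_univ (hsub : IsSubtreeOf Set.univ S₂) {s t m : Mat} (hs : s ∈ S₂) (ht : t ∈ S₂)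
    (h : IsMeetIn S₂ s t m) : IsMeetIn Set.univ s t m := by
  obtain ⟨m₂, hm₂S, _, h2s, h2t, h2min⟩ := hsub.2 s hs t ht
  have e1 : m₂ ≤ m := h.2.2.2 m₂ hm₂S h2s h2t
  have e2 : m ≤ m₂ := h2min m (Set.mem_univ m) h.2.1 h.2.2.1
  have hme : m = m₂ := le_antisymm e2 e1
  exact ⟨Set.mem_univ m, h.2.1, h.2.2.1,
    fun m' _ a b => le_of_le_of_eq (h2min m' (Set.mem_univ m') a b) hme.symm⟩

lemma levelIn_val {C : Mat} (hC : InVal S₁ S₂ C) :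
    levelIn {C | InVal S₁ S₂ C} C = levelIn S₂ C := by
  unfold levelIn
  congr 1
  ext x
  constructor
  · rintro ⟨hx, hlt⟩
    exact ⟨InVal.mem hx, hlt⟩
  · rintro ⟨hx, hlt⟩
    exact ⟨inval_pred hC x hx hlt, hlt⟩

lemma inval_extend (hpair : IsVecStrongPair S₁ S₂) (h12 : heightIn S₁ = heightIn S₂)
    {A : Mat} (hA : InVal S₁ S₂ A) (hnm : ¬ IsMaximalIn S₂ A) :
    ∃ C, InVal S₁ S₂ C ∧ IsImmSuccIn S₂ A C := by
  have hAS := hA.mem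
  obtain ⟨B, hB, hAB⟩ : ∃ B ∈ S₂, A < B := by
    by_contra h
    push_neg at h
    exact hnm ⟨hAS, fun s hs => h s hs⟩
  have hlevB : levelIn S₂ A < levelIn S₂ B := levelIn_lt_of_lt (mat_isTreeOn S₂) hAS hB hAB
  have hht : (levelIn S₂ A : ℕ∞) + 1 < heightIn S₁ := by
    rw [h12]
    calc (levelIn S₂ A : ℕ∞) + 1 < (levelIn S₂ B : ℕ∞) + 1 := by
          exact_mod_cast Nat.add_lt_add_right hlevB 1
      _ ≤ heightIn S₂ := le_heightIn hB
  obtain ⟨w, hw, hwlt⟩ := lt_heightIn hht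
  have hwle : levelIn S₂ A ≤ levelIn S₁ w := by
    have : (levelIn S₂ A : ℕ∞) < (levelIn S₁ w : ℕ∞) + 1 := lt_of_le_of_lt (by simp) hwlt
    exact_mod_cast Nat.lt_succ_iff.mp (by exact_mod_cast this)
  obtain ⟨v, hv, -, hvlev⟩ := exists_at_level (vec_isTreeOn S₁) _ w hw rfl _ hwle
  rcases hpair.2.1.2 with h0 | ⟨-, -, -, hsucc⟩
  · rw [h0] at hAS
    exact absurd hAS (Set.notMem_empty A)
  obtain ⟨c, hcp, hcu⟩ := hsucc A hAS hnm (matExtend A v) (isImmSucc_matExtend A v)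
  exact ⟨c, InVal.step A v c hA hv hvlev hcp (fun C' hC' => hcu C' hC'), hcp.1⟩

lemma inval_at_level (hpair : IsVecStrongPair S₁ S₂) (h12 : heightIn S₁ = heightIn S₂) :
    ∀ n : ℕ, (n : ℕ∞) < heightIn S₂ → ∃ C, InVal S₁ S₂ C ∧ levelIn S₂ C = n := by
  intro n
  induction n with
  | zero =>
    intro h
    obtain ⟨t, ht, -⟩ := lt_heightIn h
    rcases hpair.2.1.2 with h0 | ⟨⟨r, hr, hroot⟩, -⟩
    · rw [h0] at ht
      exact absurd ht (Set.notMem_empty t)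
    · exact ⟨r, InVal.root r hr hroot, levelIn_root hroot⟩
  | succ n ih =>
    intro h
    obtain ⟨C, hC, hlev⟩ := ih (lt_trans (by exact_mod_cast Nat.lt_succ_self n) h)
    have hnm : ¬ IsMaximalIn S₂ C := by
      intro hmax
      rcases hpair.2.1.2 with h0 | ⟨-, hbal, -, -⟩
      · rw [h0] at hmax
        exact (Set.notMem_empty C) hmax.1
      rcases hbal with ⟨-, hnomax⟩ | ⟨-, hlevmax⟩
      · exact hnomax C hmax
      · have heq := hlevmax C hmax
        rw [hlev] at heq
        have heq' : ((n + 1 : ℕ) : ℕ∞) = heightIn S₂ := by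
          rw [← heq]; push_cast; ring
        rw [← heq'] at h
        exact lt_irrefl _ h
    obtain ⟨C', hC', himm⟩ := inval_extend hpair h12 hC hnm
    exact ⟨C', hC', by rw [levelIn_immSucc (mat_isTreeOn S₂) himm, hlev]⟩

end ValTree

/-- For every vector strong subtree `(S₁, S₂)` of `(T₁, T₂)` of height `k ∈ ω + 1`, the
valuation tree `val(S₁, S₂)` is a subtree of `S₂` (hence of `T₂`) of height `k`. -/
theorem valuation_tree_is_subtree_of_height (k : ℕ∞) (S₁ : Set Vec) (S₂ : Set Mat)
    (hpair : IsVecStrongPair S₁ S₂) (h1 : heightIn S₁ = k) (h2 : heightIn S₂ = k) :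
    IsSubtreeOf S₂ {C | InVal S₁ S₂ C} ∧
    IsSubtreeOf (Set.univ : Set Mat) {C | InVal S₁ S₂ C} ∧
    heightIn {C | InVal S₁ S₂ C} = k := by
  have h12 : heightIn S₁ = heightIn S₂ := by rw [h1, h2]
  refine ⟨⟨fun C hC => InVal.mem hC, ?_⟩, ⟨Set.subset_univ _, ?_⟩, ?_⟩
  · intro s hs t ht
    obtain ⟨m, hm, hmeet⟩ := inval_meet hs ht
    exact ⟨m, hm, hmeet⟩
  · intro s hs t ht
    obtain ⟨m, hm, hmeet⟩ := inval_meet hs ht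
    exact ⟨m, hm, meet_univ hpair.2.1.1 (InVal.mem hs) (InVal.mem ht) hmeet⟩
  · rw [← h2]
    apply le_antisymm
    · refine iSup₂_le fun C hC => ?_
      rw [levelIn_val hC]
      exact le_heightIn (InVal.mem hC)
    · refine iSup₂_le fun t ht => ?_
      have hlt : (levelIn S₂ t : ℕ∞) < heightIn S₂ :=
        lt_of_lt_of_le (by exact_mod_cast Nat.lt_succ_self _) (le_heightIn ht)
      obtain ⟨C, hC, hlev⟩ := inval_at_level hpair h12 _ hlt
      have : (levelIn S₂ t : ℕ∞) + 1 =
          (levelIn {C | InVal S₁ S₂ C} C : ℕ∞) + 1 := by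
        rw [levelIn_val hC, hlev]
      rw [this]
      exact le_heightIn hC
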